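/- In the algebra A_n^m, the intersection of the m maximal ideals 𝔍_u = span{I_r : r ≠ u} (u = 1,...,m) equals the set ℛ = { Σ_{r=m+1}^n λ_r I_r : λ_r ∈ ℂ }, and every element of ℛ is nilpotent. -/

import Mathlib

/-- The intersection of the `m` maximal ideals
`𝔍_u = span{I r : r ≠ u}` equals the radical `ℛ = span{I r : m ≤ r}`, and
every element of `ℛ` is nilpotent. -/
theorem radical_eq_inter {n m : ℕ} (A : Type*) [CommRing A] [Algebra ℂ A]
    (I : Module.Basis (Fin n) ℂ A)
    (h1 : ∀ r s : Fin n, (r : ℕ) < m → (s : ℕ) < m →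
      I r * I s = if r = s then I r else 0)
    (h2 : ∀ r s : Fin n, m ≤ (r : ℕ) → m ≤ (s : ℕ) →
      I r * I s ∈ Submodule.span ℂ {x : A | ∃ p : Fin n, max r s < p ∧ x = I p})
    (uu : Fin n → Fin n)
    (h3 : ∀ s : Fin n, m ≤ (s : ℕ) → (uu s : ℕ) < m ∧ I (uu s) * I s = I s ∧
      ∀ r : Fin n, (r : ℕ) < m → r ≠ uu s → I r * I s = 0)
    (hone : (1 : A) = ∑ r ∈ Finset.univ.filter (fun r : Fin n => (r : ℕ) < m), I r) :
    (⋂ u ∈ {u : Fin n | (u : ℕ) < m},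
        (Submodule.span ℂ {x : A | ∃ r : Fin n, r ≠ u ∧ x = I r} : Set A)) =
      (Submodule.span ℂ {x : A | ∃ r : Fin n, m ≤ (r : ℕ) ∧ x = I r} : Set A) ∧
    ∀ x ∈ Submodule.span ℂ {x : A | ∃ r : Fin n, m ≤ (r : ℕ) ∧ x = I r},
      IsNilpotent x := by
  -- general description of spans of sets of basis vectors
  have key : ∀ (P : Fin n → Prop) (x : A),
      x ∈ Submodule.span ℂ {y : A | ∃ r, P r ∧ y = I r} ↔
        ∀ r, ¬ P r → I.repr x r = 0 := by
    intro P x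
    have hset : {y : A | ∃ r, P r ∧ y = I r} = I '' {r | P r} := by
      ext y; constructor
      · rintro ⟨r, hr, rfl⟩; exact ⟨r, hr, rfl⟩
      · rintro ⟨r, hr, rfl⟩; exact ⟨r, hr, rfl⟩
    rw [hset, Module.Basis.mem_span_image]
    constructor
    · intro h r hr
      by_contra hne
      exact hr (h (Finsupp.mem_support_iff.2 hne))
    · intro h r hr
      by_contra hne
      exact Finsupp.mem_support_iff.1 hr (h r hne)
  -- the graded filtration
  set J : ℕ → Submodule ℂ A :=
    fun t => Submodule.span ℂ {x : A | ∃ r : Fin n, t ≤ (r : ℕ) ∧ x = I r} with hJ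
  -- multiplication pushes the filtration up
  have mul_mem : ∀ t : ℕ, m ≤ t → ∀ a ∈ J m, ∀ b ∈ J t, a * b ∈ J (t + 1) := by
    intro t ht a ha
    induction ha using Submodule.span_induction with
    | mem a hag =>
      obtain ⟨r, hr, rfl⟩ := hag
      intro b hb
      induction hb using Submodule.span_induction with
      | mem b hbg =>
        obtain ⟨s, hs, rfl⟩ := hbg
        have h2' := h2 r s hr (ht.trans hs)
        refine Submodule.span_mono ?_ h2'
        rintro x ⟨p, hp, rfl⟩
        refine ⟨p, ?_, rfl⟩
        have : (s : ℕ) < (p : ℕ) := lt_of_le_of_lt (Fin.le_def.1 (le_max_right r s)) hp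
        omega
      | zero => simpa using (J (t + 1)).zero_mem
      | add b c _ _ hbih hcih =>
        rw [mul_add]; exact (J (t + 1)).add_mem hbih hcih
      | smul c b _ hbih =>
        rw [mul_smul_comm]; exact (J (t + 1)).smul_mem c hbih
    | zero => intro b hb; simpa using (J (t + 1)).zero_mem
    | add a c _ _ haih hcih =>
      intro b hb; rw [add_mul]; exact (J (t + 1)).add_mem (haih b hb) (hcih b hb)
    | smul c a _ haih =>
      intro b hb; rw [smul_mul_assoc]; exact (J (t + 1)).smul_mem c (haih b hb)
  constructor
  · ext x
    simp only [Set.mem_iInter, Set.mem_setOf_eq, SetLike.mem_coe, key]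
    constructor
    · intro h r hr
      push_neg at hr
      have := h r hr r
      simpa using this
    · intro h u hu r hr
      push_neg at hr
      subst hr
      exact h r (by omega)
  · intro x hx
    have pow_mem : ∀ k : ℕ, x ^ (k + 1) ∈ J (m + k) := by
      intro k
      induction k with
      | zero => simpa using hx
      | succ k ih =>
        have := mul_mem (m + k) (by omega) x hx (x ^ (k + 1)) ih
        rw [pow_succ, mul_comm]
        exact this
    refine ⟨n - m + 1, ?_⟩
    have h0 := pow_mem (n - m)
    have hempty : {x : A | ∃ r : Fin n, m + (n - m) ≤ (r : ℕ) ∧ x = I r} = ∅ := by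
      ext y
      simp only [Set.mem_setOf_eq, Set.mem_empty_iff_false, iff_false]
      rintro ⟨r, hr, rfl⟩
      have := r.isLt
      omega
    rw [hJ] at h0
    simp only [hempty, Submodule.span_empty, Submodule.mem_bot] at h0
    exact h0
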